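/- Let Z ∈ ℝ^{n×q}, let H_1, …, H_{r−1} ∈ ℝ^{q×q} be symmetric matrices, and for v ∈ ℝ^r define Σ(v) = Z (Σ_{j=1}^{r−1} v_j H_j) Zᵀ + v_r I_n. Fix ψ ∈ ℝ^r such that Σ(ψ) is positive definite, and set A_j(ψ) = Σ(ψ)^{-1/2} Z H_j Zᵀ Σ(ψ)^{-1/2} for j ∈ {1, …, r−1} and A_r(ψ) = Σ(ψ)^{-1}. Let I(ψ) ∈ ℝ^{r×r} be the matrix with entries I(ψ)_{ij} = tr(A_i(ψ) A_j(ψ))/2. Then I(ψ) is positive definite if and only if Σ(v) ≠ 0 for every v ∈ ℝ^r with ‖v‖ = 1 (equivalently, the linear map v ↦ Σ(v) is injective). -/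

import Mathlib

open Matrix

open Classical in
/-- The positive semidefinite square root of a matrix (junk value `0` off the
positive semidefinite matrices). -/
noncomputable def msqrt {ι : Type*} [Fintype ι] [DecidableEq ι] (M : Matrix ι ι ℝ) :
    Matrix ι ι ℝ :=
  if h : M.PosSemidef then
    (h.1.eigenvectorUnitary : Matrix ι ι ℝ) * diagonal ((↑) ∘ (√·) ∘ h.1.eigenvalues) *
      (star (h.1.eigenvectorUnitary : Matrix ι ι ℝ))
  else 0

/-- `Σ(v) = Z (∑_{j<r} v_j H_j) Zᵀ + v_r I_n`, where the parameter has `r + 1`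
coordinates, the first `r` multiplying the matrices `H_j` and the last multiplying
the identity. -/
noncomputable def SigmaMat {n q r : ℕ} (Z : Matrix (Fin n) (Fin q) ℝ)
    (H : Fin r → Matrix (Fin q) (Fin q) ℝ) (v : Fin (r + 1) → ℝ) :
    Matrix (Fin n) (Fin n) ℝ :=
  Z * (∑ j, v j.castSucc • H j) * Zᵀ + v (Fin.last r) • 1

/-- `A_j(ψ) = Σ(ψ)^{-1/2} Z H_j Zᵀ Σ(ψ)^{-1/2}` for `j < r` and `A_r(ψ) = Σ(ψ)⁻¹`. -/
noncomputable def Aj {n q r : ℕ} (Z : Matrix (Fin n) (Fin q) ℝ)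
    (H : Fin r → Matrix (Fin q) (Fin q) ℝ) (ψ : Fin (r + 1) → ℝ) (j : Fin (r + 1)) :
    Matrix (Fin n) (Fin n) ℝ :=
  Fin.lastCases (SigmaMat Z H ψ)⁻¹
    (fun i => (msqrt (SigmaMat Z H ψ))⁻¹ * (Z * H i * Zᵀ) * (msqrt (SigmaMat Z H ψ))⁻¹) j

/-- The Fisher information matrix `I(ψ)_{ij} = tr(A_i(ψ) A_j(ψ))/2`. -/
noncomputable def infoMat {n q r : ℕ} (Z : Matrix (Fin n) (Fin q) ℝ)
    (H : Fin r → Matrix (Fin q) (Fin q) ℝ) (ψ : Fin (r + 1) → ℝ) :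
    Matrix (Fin (r + 1)) (Fin (r + 1)) ℝ :=
  Matrix.of fun i j => (Aj Z H ψ i * Aj Z H ψ j).trace / 2

/-- The Fisher information `I(ψ)` is positive definite if and only if the linear map
`v ↦ Σ(v)` is injective, i.e. `Σ(v) ≠ 0` for every `v ≠ 0` (equivalently, for every
unit vector `v`). -/
theorem stmt7 {n q r : ℕ} (Z : Matrix (Fin n) (Fin q) ℝ)
    (H : Fin r → Matrix (Fin q) (Fin q) ℝ) (hH : ∀ j, (H j).IsSymm)
    (ψ : Fin (r + 1) → ℝ) (hψ : (SigmaMat Z H ψ).PosDef) :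
    (infoMat Z H ψ).PosDef ↔ ∀ v : Fin (r + 1) → ℝ, v ≠ 0 → SigmaMat Z H v ≠ 0 := by
  set S := SigmaMat Z H ψ with hSdef
  have hpsd : S.PosSemidef := hψ.posSemidef
  set R := msqrt S with hRdef
  have hR : R = (hpsd.1.eigenvectorUnitary : Matrix (Fin n) (Fin n) ℝ) *
      diagonal ((↑) ∘ (√·) ∘ hpsd.1.eigenvalues) *
      (star (hpsd.1.eigenvectorUnitary : Matrix (Fin n) (Fin n) ℝ)) := by
    rw [hRdef, msqrt, dif_pos hpsd]
  have hRR : R * R = S := by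
    have hU := Matrix.UnitaryGroup.star_mul_self hpsd.1.eigenvectorUnitary
    have hsp := hpsd.1.spectral_theorem
    rw [Unitary.conjStarAlgAut_apply] at hsp
    rw [hR]
    calc _ = (hpsd.1.eigenvectorUnitary : Matrix (Fin n) (Fin n) ℝ) *
          (diagonal ((↑) ∘ (√·) ∘ hpsd.1.eigenvalues) *
          (star (hpsd.1.eigenvectorUnitary : Matrix (Fin n) (Fin n) ℝ) *
          (hpsd.1.eigenvectorUnitary : Matrix (Fin n) (Fin n) ℝ)) *
          diagonal ((↑) ∘ (√·) ∘ hpsd.1.eigenvalues)) *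
          (star (hpsd.1.eigenvectorUnitary : Matrix (Fin n) (Fin n) ℝ)) := by
            simp only [Matrix.mul_assoc]
      _ = S := by
        rw [hU, Matrix.mul_one, diagonal_mul_diagonal]
        conv_rhs => rw [hsp]
        congr 2
        congr 1
        funext i
        simp [Real.mul_self_sqrt (hpsd.eigenvalues_nonneg i)]
  have hdet : IsUnit R.det := by
    have : IsUnit (R.det * R.det) := by
      rw [← det_mul, hRR]; exact hψ.det_pos.ne'.isUnit
    exact isUnit_of_mul_isUnit_left this
  have hRinv : R * R⁻¹ = 1 := mul_nonsing_inv R hdet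
  have hRinv' : R⁻¹ * R = 1 := nonsing_inv_mul R hdet
  have hSinv : S⁻¹ = R⁻¹ * R⁻¹ := by rw [← hRR, Matrix.mul_inv_rev]
  have hRH : Rᵀ = R := by
    rw [hR]
    simp [Matrix.transpose_mul, Matrix.mul_assoc, star_eq_conjTranspose,
      conjTranspose_eq_transpose_of_trivial]
  have hRiH : (R⁻¹)ᵀ = R⁻¹ := by rw [transpose_nonsing_inv, hRH]
  -- the key identity
  have key : ∀ v : Fin (r + 1) → ℝ,
      ∑ j, v j • Aj Z H ψ j = R⁻¹ * SigmaMat Z H v * R⁻¹ := by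
    intro v
    rw [Fin.sum_univ_castSucc]
    simp only [Aj, Fin.lastCases_castSucc, Fin.lastCases_last, ← hSdef, ← hRdef, hSinv]
    rw [SigmaMat, Matrix.mul_add, Matrix.add_mul]
    congr 1
    · simp only [Matrix.mul_sum, Matrix.sum_mul, Matrix.mul_smul, Matrix.smul_mul,
        Matrix.mul_assoc]
    · simp only [Matrix.mul_smul, Matrix.smul_mul, Matrix.mul_one]
  -- symmetry of the A_j
  have hsym : ∀ j, (Aj Z H ψ j)ᵀ = Aj Z H ψ j := by
    intro j
    refine Fin.lastCases ?_ (fun i => ?_) j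
    · simp only [Aj, Fin.lastCases_last, ← hSdef]
      rw [transpose_nonsing_inv]
      congr 1
      rw [← conjTranspose_eq_transpose_of_trivial]
      exact hψ.1
    · simp only [Aj, Fin.lastCases_castSucc, ← hSdef, ← hRdef]
      rw [transpose_mul, transpose_mul, transpose_mul, transpose_mul, hRiH,
        transpose_transpose, (hH i).eq]
      simp only [Matrix.mul_assoc]
  -- quadratic form identity
  have quad : ∀ v : Fin (r + 1) → ℝ,
      v ⬝ᵥ (infoMat Z H ψ) *ᵥ v
        = ((∑ j, v j • Aj Z H ψ j) * (∑ j, v j • Aj Z H ψ j)).trace / 2 := by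
    intro v
    rw [Finset.sum_mul_sum]
    simp only [dotProduct, mulVec, infoMat, Matrix.of_apply, Matrix.smul_mul,
      Matrix.mul_smul, smul_smul, trace_sum, trace_smul, smul_eq_mul, Finset.sum_div,
      Finset.mul_sum]
    refine Finset.sum_congr rfl fun i _ => Finset.sum_congr rfl fun j _ => by ring
  -- trace of square of symmetric matrix as sum of squares
  have trsq : ∀ T : Matrix (Fin n) (Fin n) ℝ, Tᵀ = T →
      (T * T).trace = ∑ j, ∑ i, T i j * T i j := by
    intro T hT
    have hTe : ∀ a b, T a b = T b a := fun a b => by simpa using congrFun (congrFun hT b) a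
    calc (T * T).trace = ∑ x, ∑ y, T x y * T y x := by
          simp [Matrix.trace, Matrix.mul_apply, Matrix.diag]
    _ = ∑ x, ∑ y, T x y * T x y :=
          Finset.sum_congr rfl fun x _ => Finset.sum_congr rfl fun y _ => by rw [hTe y x]
    _ = ∑ j, ∑ i, T i j * T i j := Finset.sum_comm
  have hTsym : ∀ v : Fin (r + 1) → ℝ, (∑ j, v j • Aj Z H ψ j)ᵀ = ∑ j, v j • Aj Z H ψ j := by
    intro v
    rw [transpose_sum]
    exact Finset.sum_congr rfl fun j _ => by rw [transpose_smul, hsym]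
  constructor
  · intro hpos v hv hzero
    have h1 := hpos.dotProduct_mulVec_pos hv
    rw [star_trivial, quad v, key v, hzero, Matrix.mul_zero, Matrix.zero_mul] at h1
    simp at h1
  · intro hinj
    refine Matrix.PosDef.of_dotProduct_mulVec_pos ?_ ?_
    · ext i j
      simp only [conjTranspose_apply, infoMat, Matrix.of_apply, star_trivial]
      rw [Matrix.trace_mul_comm]
    · intro v hv
      rw [star_trivial, quad v]
      set T := ∑ j, v j • Aj Z H ψ j with hTdef
      have htr : (T * T).trace = ∑ j, ∑ i, T i j * T i j := trsq T (hTsym v)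
      have hnn : 0 ≤ (T * T).trace := by
        rw [htr]
        exact Finset.sum_nonneg fun j _ => Finset.sum_nonneg fun i _ => mul_self_nonneg _
      rcases lt_or_eq_of_le hnn with h | h
      · positivity
      · exfalso
        have hT0 : T = 0 := by
          have h0 : ∑ j, ∑ i, T i j * T i j = 0 := by rw [← htr]; exact h.symm
          ext i j
          have := (Finset.sum_eq_zero_iff_of_nonneg
            (fun j _ => Finset.sum_nonneg fun i _ => mul_self_nonneg (T i j))).1 h0
          have h2 := (Finset.sum_eq_zero_iff_of_nonneg
            (fun i _ => mul_self_nonneg (T i j))).1 (this j (Finset.mem_univ j)) i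
            (Finset.mem_univ i)
          exact mul_self_eq_zero.1 h2
        have hS0 : SigmaMat Z H v = 0 := by
          have : R * T * R = SigmaMat Z H v := by
            rw [hTdef, key v, ← Matrix.mul_assoc, ← Matrix.mul_assoc, hRinv,
              Matrix.one_mul, Matrix.mul_assoc, hRinv', Matrix.mul_one]
          rw [← this, hT0, Matrix.mul_zero, Matrix.zero_mul]
        exact hinj v hv hS0
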